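/- Negative-weight adversary upper bound for ordered search: let n ≥ 2 and let γ_1,…,γ_n be arbitrary real numbers (not necessarily nonnegative) such that the spectral norm of the n×n symmetric Toeplitz matrix Toeplitz(γ_n,…,γ_1) is at most 1. Then γ_n + 2∑_{i=1}^{n−1} γ_i ≤ 2 ∑_{k=0}^{n−1} ξ_k² + 1. -/

import Mathlib

/-- `ξ i = C(2i, i) / 4^i`. -/
noncomputable def xi (i : ℕ) : ℝ := (Nat.choose (2 * i) i : ℝ) / 4 ^ i

/-- `toeplitz n γ` is the `n×n` symmetric Toeplitz matrix `Toeplitz(γ_n, …, γ_1)` whose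
`(i,j)` entry (for `1 ≤ i, j ≤ n`) is `γ_{n − |i−j|}`. -/
def toeplitz (n : ℕ) (γ : ℕ → ℝ) : Matrix (Fin n) (Fin n) ℝ :=
  Matrix.of fun i j => γ (n - (max (i : ℕ) (j : ℕ) - min (i : ℕ) (j : ℕ)))

/-- The spectral norm (largest singular value) of a real matrix, as the operator norm
of its action on Euclidean space. -/
noncomputable def sNorm {n : ℕ} (M : Matrix (Fin n) (Fin n) ℝ) : ℝ :=
  ‖Matrix.toEuclideanCLM (𝕜 := ℝ) M‖


open Finset


open Finset in
lemma cb_conv (m : ℕ) :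
    ∑ i ∈ Finset.range (m + 1), Nat.centralBinom i * Nat.centralBinom (m - i) = 4 ^ m := by
  induction m with
  | zero => simp [Nat.centralBinom]
  | succ m ih =>
    set c := Nat.centralBinom with hc
    have key : ∀ k : ℕ, 2 * ∑ i ∈ range (k + 1), i * (c i * c (k - i))
        = k * ∑ i ∈ range (k + 1), c i * c (k - i) := by
      intro k
      have hrefl : ∑ i ∈ range (k + 1), i * (c i * c (k - i))
          = ∑ i ∈ range (k + 1), (k - i) * (c (k - i) * c i) := by
        have h := Finset.sum_range_reflect (fun i => i * (c i * c (k - i))) (k + 1)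
        rw [← h]
        apply Finset.sum_congr rfl
        intro i hi
        have hik : i < k + 1 := Finset.mem_range.mp hi
        have h1 : k + 1 - 1 - i = k - i := by omega
        have h2 : k - (k - i) = i := by omega
        rw [h1, h2, mul_comm (c (k - i)) (c i)]
      rw [two_mul]
      nth_rewrite 2 [hrefl]
      rw [← Finset.sum_add_distrib, Finset.mul_sum]
      apply Finset.sum_congr rfl
      intro i hi
      have hik : i < k + 1 := Finset.mem_range.mp hi
      rw [mul_comm (c (k - i)) (c i)]
      have h3 : i * (c i * c (k - i)) + (k - i) * (c i * c (k - i))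
          = (i + (k - i)) * (c i * c (k - i)) := by ring
      rw [h3]
      congr 1
      omega
    have shift : ∑ i ∈ range (m + 2), i * (c i * c (m + 1 - i))
        = ∑ i ∈ range (m + 1), (2 * (2 * i + 1)) * (c i * c (m - i)) := by
      rw [Finset.sum_range_succ' (fun i => i * (c i * c (m + 1 - i))) (m + 1)]
      simp only [Nat.zero_mul, add_zero]
      apply Finset.sum_congr rfl
      intro i hi
      have h1 : m + 1 - (i + 1) = m - i := by omega
      rw [h1, ← mul_assoc, hc, Nat.succ_mul_centralBinom_succ]
      ring
    have expand : ∑ i ∈ range (m + 1), (2 * (2 * i + 1)) * (c i * c (m - i))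
        = 4 * ∑ i ∈ range (m + 1), i * (c i * c (m - i))
          + 2 * ∑ i ∈ range (m + 1), c i * c (m - i) := by
      rw [Finset.mul_sum, Finset.mul_sum, ← Finset.sum_add_distrib]
      apply Finset.sum_congr rfl
      intro i _
      ring
    have step : (m + 1) * ∑ i ∈ range (m + 2), c i * c (m + 1 - i)
        = (m + 1) * (4 * ∑ i ∈ range (m + 1), c i * c (m - i)) := by
      calc (m + 1) * ∑ i ∈ range (m + 2), c i * c (m + 1 - i)
          = 2 * ∑ i ∈ range (m + 2), i * (c i * c (m + 1 - i)) := (key (m + 1)).symm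
        _ = 2 * (4 * ∑ i ∈ range (m + 1), i * (c i * c (m - i))
              + 2 * ∑ i ∈ range (m + 1), c i * c (m - i)) := by rw [shift, expand]
        _ = 4 * (2 * ∑ i ∈ range (m + 1), i * (c i * c (m - i)))
              + 4 * ∑ i ∈ range (m + 1), c i * c (m - i) := by ring
        _ = 4 * (m * ∑ i ∈ range (m + 1), c i * c (m - i))
              + 4 * ∑ i ∈ range (m + 1), c i * c (m - i) := by rw [key m]
        _ = (m + 1) * (4 * ∑ i ∈ range (m + 1), c i * c (m - i)) := by ring
    have hcancel := Nat.eq_of_mul_eq_mul_left (by omega : 0 < m + 1) step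
    rw [hcancel, ih]
    ring

lemma xi_eq (i : ℕ) : xi i = (Nat.centralBinom i : ℝ) / 4 ^ i := rfl

lemma xi_pos (i : ℕ) : 0 < xi i := by
  rw [xi_eq]
  apply div_pos
  · exact_mod_cast Nat.centralBinom_pos i
  · positivity

lemma xi_succ_le (i : ℕ) : xi (i + 1) ≤ xi i := by
  have h : Nat.centralBinom (i + 1) ≤ 4 * Nat.centralBinom i := by
    have h2 := Nat.succ_mul_centralBinom_succ i
    have h3 : (i + 1) * Nat.centralBinom (i + 1) ≤ (i + 1) * (4 * Nat.centralBinom i) := by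
      rw [h2]; nlinarith [Nat.centralBinom_pos i]
    exact Nat.le_of_mul_le_mul_left h3 (by omega)
  rw [xi_eq, xi_eq, div_le_div_iff₀ (by positivity) (by positivity)]
  calc (Nat.centralBinom (i + 1) : ℝ) * 4 ^ i ≤ (4 * Nat.centralBinom i : ℕ) * 4 ^ i := by
        have : (Nat.centralBinom (i+1) : ℝ) ≤ (4 * Nat.centralBinom i : ℕ) := by exact_mod_cast h
        exact mul_le_mul_of_nonneg_right this (by positivity)
    _ = (Nat.centralBinom i : ℝ) * 4 ^ (i + 1) := by push_cast; ring

lemma xi_anti : Antitone xi := antitone_nat_of_succ_le xi_succ_le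

lemma xi_zero : xi 0 = 1 := by norm_num [xi]

lemma xi_one : xi 1 = 1 / 2 := by norm_num [xi, Nat.choose]

lemma xi_conv (m : ℕ) : ∑ i ∈ Finset.range (m + 1), xi i * xi (m - i) = 1 := by
  have key : ∀ i ∈ Finset.range (m + 1), xi i * xi (m - i)
      = (Nat.centralBinom i * Nat.centralBinom (m - i) : ℕ) / 4 ^ m := by
    intro i hi
    have him : i ≤ m := by have := Finset.mem_range.mp hi; omega
    rw [xi_eq, xi_eq, div_mul_div_comm, ← pow_add]
    have : i + (m - i) = m := by omega
    rw [this]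
    push_cast
    ring
  rw [Finset.sum_congr rfl key, ← Finset.sum_div, ← Nat.cast_sum, cb_conv]
  norm_num

-- quadratic form bound
lemma quad_bound {n : ℕ} (M : Matrix (Fin n) (Fin n) ℝ) (h : sNorm M ≤ 1) (y : Fin n → ℝ) :
    |∑ i : Fin n, ∑ j : Fin n, M i j * (y i * y j)| ≤ ∑ i : Fin n, y i * y i := by
  set x : EuclideanSpace ℝ (Fin n) := (WithLp.equiv 2 (Fin n → ℝ)).symm y with hx
  have hxi : ∀ i, x i = y i := fun i => rfl
  have happ : (Matrix.toEuclideanCLM (𝕜 := ℝ) M) x = (WithLp.equiv 2 (Fin n → ℝ)).symm (M.mulVec y) :=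
    rfl
  have hinner : ∑ i : Fin n, ∑ j : Fin n, M i j * (y i * y j)
      = (inner ℝ x ((Matrix.toEuclideanCLM (𝕜 := ℝ) M) x) : ℝ) := by
    rw [happ]
    rw [PiLp.inner_apply]
    apply Finset.sum_congr rfl
    intro i _
    simp only [RCLike.inner_apply, conj_trivial]
    show _ = (M.mulVec y) i * y i
    rw [mul_comm]
    rw [Matrix.mulVec, dotProduct]
    rw [Finset.mul_sum]
    apply Finset.sum_congr rfl
    intro j _
    ring
  have hnx : ‖x‖ ^ 2 = ∑ i : Fin n, y i * y i := by
    rw [EuclideanSpace.norm_eq, Real.sq_sqrt (by positivity)]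
    apply Finset.sum_congr rfl
    intro i _
    rw [hxi]
    simp [sq_abs, sq]
  rw [hinner]
  calc |(inner ℝ x ((Matrix.toEuclideanCLM (𝕜 := ℝ) M) x) : ℝ)|
      ≤ ‖x‖ * ‖(Matrix.toEuclideanCLM (𝕜 := ℝ) M) x‖ := abs_real_inner_le_norm _ _
    _ ≤ ‖x‖ * (‖(Matrix.toEuclideanCLM (𝕜 := ℝ) M)‖ * ‖x‖) := by
        apply mul_le_mul_of_nonneg_left (ContinuousLinearMap.le_opNorm _ x) (norm_nonneg x)
    _ ≤ ‖x‖ * (1 * ‖x‖) := by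
        apply mul_le_mul_of_nonneg_left _ (norm_nonneg x)
        apply mul_le_mul_of_nonneg_right h (norm_nonneg x)
    _ = ‖x‖ ^ 2 := by ring
    _ = ∑ i : Fin n, y i * y i := hnx

lemma double_sum_split (n : ℕ) (f : ℕ → ℕ → ℝ) (hsym : ∀ i j, f i j = f j i) :
    ∑ i ∈ range n, ∑ j ∈ range n, f i j
      = ∑ i ∈ range n, f i i + 2 * ∑ j ∈ range n, ∑ i ∈ range j, f i j := by
  induction n with
  | zero => simp
  | succ n ih =>
    rw [Finset.sum_range_succ (fun i => ∑ j ∈ range (n+1), f i j) n]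
    have h1 : ∀ i, ∑ j ∈ range (n+1), f i j = ∑ j ∈ range n, f i j + f i n :=
      fun i => Finset.sum_range_succ _ n
    simp only [h1]
    rw [Finset.sum_add_distrib, ih]
    rw [Finset.sum_range_succ (fun i => f i i) n]
    rw [Finset.sum_range_succ (fun j => ∑ i ∈ range j, f i j) n]
    have h2 : ∑ j ∈ range n, f n j = ∑ j ∈ range n, f j n := by
      apply Finset.sum_congr rfl; intro j _; rw [hsym]
    rw [h2]
    ring

lemma triangle_swap (n : ℕ) (g : ℕ → ℕ → ℝ) :
    ∑ j ∈ range n, ∑ d ∈ range j, g j d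
      = ∑ d ∈ range n, ∑ j ∈ Ico (d + 1) n, g j d := by
  induction n with
  | zero => simp
  | succ n ih =>
    rw [Finset.sum_range_succ (fun j => ∑ d ∈ range j, g j d) n]
    rw [Finset.sum_range_succ (fun d => ∑ j ∈ Ico (d+1) (n+1), g j d) n]
    have h1 : ∀ d ∈ range n, ∑ j ∈ Ico (d+1) (n+1), g j d
        = ∑ j ∈ Ico (d+1) n, g j d + g n d := by
      intro d hd
      exact Finset.sum_Ico_succ_top (by have := mem_range.mp hd; omega) _
    rw [Finset.sum_congr rfl h1, Finset.sum_add_distrib, ih]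
    simp

lemma L1 (n : ℕ) (hn : 2 ≤ n) (γ : ℕ → ℝ) :
    ∑ i ∈ range n, ∑ j ∈ range n,
        γ (n - (max i j - min i j)) * (xi (min i j) * xi (n - 1 - max i j))
      = γ n + 2 * ∑ k ∈ Finset.Icc 1 (n - 1), γ k := by
  set f : ℕ → ℕ → ℝ :=
    fun i j => γ (n - (max i j - min i j)) * (xi (min i j) * xi (n - 1 - max i j)) with hf
  have hsym : ∀ i j, f i j = f j i := by
    intro i j; simp only [hf, max_comm i j, min_comm i j]
  rw [double_sum_split n f hsym]
  -- diagonal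
  have hdiag : ∑ i ∈ range n, f i i = γ n := by
    have h1 : ∀ i, f i i = γ n * (xi i * xi (n - 1 - i)) := by
      intro i; simp only [hf, max_self, min_self, Nat.sub_self, Nat.sub_zero]
    simp only [h1]
    rw [← Finset.mul_sum]
    have h2 : ∑ i ∈ range n, xi i * xi (n - 1 - i) = 1 := by
      have h3 := xi_conv (n - 1)
      rw [show n - 1 + 1 = n from by omega] at h3
      rw [← h3]
    rw [h2, mul_one]
  rw [hdiag]
  -- strict upper triangle
  have htri : ∑ j ∈ range n, ∑ i ∈ range j, f i j
      = ∑ d ∈ range (n - 1), γ (n - (d + 1)) := by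
    have h1 : ∀ j ∈ range n, ∑ i ∈ range j, f i j
        = ∑ d ∈ range j, γ (n - (d + 1)) * (xi (j - 1 - d) * xi (n - 1 - j)) := by
      intro j _
      rw [← Finset.sum_range_reflect (fun i => f i j) j]
      apply Finset.sum_congr rfl
      intro d hd
      have hdj : d < j := mem_range.mp hd
      have hmin : min (j - 1 - d) j = j - 1 - d := by omega
      have hmax : max (j - 1 - d) j = j := by omega
      simp only [hf, hmin, hmax]
      congr 3
      omega
    rw [Finset.sum_congr rfl h1, triangle_swap]
    have h2 : ∑ d ∈ range n, ∑ j ∈ Ico (d+1) n,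
          γ (n - (d + 1)) * (xi (j - 1 - d) * xi (n - 1 - j))
        = ∑ d ∈ range ((n-1)+1), ∑ j ∈ Ico (d+1) n,
          γ (n - (d + 1)) * (xi (j - 1 - d) * xi (n - 1 - j)) := by
      apply Finset.sum_congr _ (fun x _ => rfl)
      rw [show (n-1)+1 = n from by omega]
    rw [h2, Finset.sum_range_succ]
    have h3 : Ico ((n-1)+1) n = ∅ := by
      apply Finset.Ico_eq_empty
      omega
    rw [h3]
    simp only [Finset.sum_empty, add_zero]
    apply Finset.sum_congr rfl
    intro d hd
    have hdn : d < n - 1 := mem_range.mp hd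
    rw [← Finset.mul_sum]
    have h4 : ∑ j ∈ Ico (d+1) n, xi (j - 1 - d) * xi (n - 1 - j) = 1 := by
      rw [Finset.sum_Ico_eq_sum_range]
      have h5 := xi_conv (n - 2 - d)
      rw [show n - 2 - d + 1 = n - (d + 1) from by omega] at h5
      rw [← h5]
      apply Finset.sum_congr rfl
      intro t ht
      have htn : t < n - (d + 1) := mem_range.mp ht
      congr 2 <;> omega
    rw [h4, mul_one]
  rw [htri]
  have hfin : ∑ d ∈ range (n - 1), γ (n - (d + 1)) = ∑ k ∈ Finset.Icc 1 (n-1), γ k := by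
    rw [show Finset.Icc 1 (n-1) = Finset.Ico 1 n from by rw [← Finset.Ico_add_one_right_eq_Icc]; congr 1; omega]
    rw [Finset.sum_Ico_eq_sum_range]
    rw [show n - 1 = n - 1 from rfl]
    rw [← Finset.sum_range_reflect (fun t => γ (1 + t)) (n-1)]
    apply Finset.sum_congr rfl
    intro d hd
    have hdn : d < n - 1 := mem_range.mp hd
    congr 1
    omega
  rw [hfin]

noncomputable def vv (n i : ℕ) : ℝ := xi (n - 1 - i)
noncomputable def rr (n : ℕ) : ℝ := (xi (n - 1))⁻¹
noncomputable def DD (n : ℕ) : ℝ := rr n - (rr n)⁻¹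
noncomputable def rho (n c : ℕ) : ℝ := xi c / xi (n - 1 - c)
noncomputable def del (n c : ℕ) : ℝ := rho n c - rho n (c + 1)
noncomputable def ee (n i : ℕ) : ℝ := rr n * vv n i - xi i
noncomputable def bet (n c i : ℕ) : ℝ := (if c < i then vv n i else 0) - ee n i / DD n
noncomputable def c1 (n : ℕ) : ℝ := (rr n + (rr n)⁻¹) / (2 * DD n)
noncomputable def c2 (n : ℕ) : ℝ := (1 - (rr n)⁻¹) / DD n

lemma rr_gt_one {n : ℕ} (hn : 2 ≤ n) : 1 < rr n := by
  have hx : xi (n - 1) ≤ 1 / 2 := by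
    rw [← xi_one]; exact xi_anti (by omega)
  have hp := xi_pos (n - 1)
  have hinv : 0 < (xi (n - 1))⁻¹ := by positivity
  have hone : xi (n - 1) * (xi (n - 1))⁻¹ = 1 := mul_inv_cancel₀ (ne_of_gt hp)
  show 1 < (xi (n - 1))⁻¹
  nlinarith

lemma rr_pos {n : ℕ} (hn : 2 ≤ n) : 0 < rr n := lt_trans one_pos (rr_gt_one hn)

lemma DD_pos {n : ℕ} (hn : 2 ≤ n) : 0 < DD n := by
  have h1 := rr_gt_one hn
  have h2 : (rr n)⁻¹ < 1 := inv_lt_one_of_one_lt₀ h1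
  unfold DD; linarith

lemma vv_pos (n i : ℕ) : 0 < vv n i := xi_pos _

lemma del_nonneg (n c : ℕ) : 0 ≤ del n c := by
  unfold del rho
  rw [sub_nonneg, div_le_div_iff₀ (xi_pos _) (xi_pos _)]
  apply mul_le_mul (xi_anti (by omega)) (xi_anti (by omega)) (le_of_lt (xi_pos _))
    (le_of_lt (xi_pos _))

lemma c1_nonneg {n : ℕ} (hn : 2 ≤ n) : 0 ≤ c1 n := by
  have h1 := rr_pos hn
  have h2 := DD_pos hn
  unfold c1; positivity

lemma c2_nonneg {n : ℕ} (hn : 2 ≤ n) : 0 ≤ c2 n := by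
  have h1 := rr_gt_one hn
  have h2 : (rr n)⁻¹ < 1 := inv_lt_one_of_one_lt₀ h1
  have h3 := DD_pos hn
  unfold c2
  apply div_nonneg (by linarith) (le_of_lt h3)

lemma telescope (n k : ℕ) : ∑ c ∈ range k, del n c = rho n 0 - rho n k :=
  Finset.sum_range_sub' (rho n) k

lemma rho_zero (n : ℕ) : rho n 0 = rr n := by
  unfold rho rr
  rw [Nat.sub_zero, xi_zero, one_div]

lemma rho_last (n : ℕ) : rho n (n - 1) = (rr n)⁻¹ := by
  unfold rho rr
  rw [Nat.sub_self, xi_zero, div_one, inv_inv]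

lemma rho_eq (n i : ℕ) : rho n i = xi i / vv n i := rfl

lemma betasum {n : ℕ} (hn : 2 ≤ n) {i j : ℕ} (hij : i ≤ j) (hj : j ≤ n - 1) :
    ∑ c ∈ range (n - 1), del n c * (bet n c i * bet n c j)
      = ee n i * vv n j - ee n i * ee n j / DD n := by
  have hin : i ≤ n - 1 := le_trans hij hj
  rw [← Finset.sum_range_add_sum_Ico _ hin, ← Finset.sum_Ico_consecutive _ hij hj]
  have e1 : ∑ c ∈ range i, del n c * (bet n c i * bet n c j)
      = (rr n - rho n i) * ((vv n i - ee n i / DD n) * (vv n j - ee n j / DD n)) := by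
    rw [← rho_zero n, ← telescope n i, Finset.sum_mul]
    apply Finset.sum_congr rfl
    intro c hc
    have hci : c < i := mem_range.mp hc
    unfold bet
    rw [if_pos hci, if_pos (lt_of_lt_of_le hci hij)]
  have hIcoi : ∑ c ∈ Ico i j, del n c = rho n i - rho n j := by
    have := Finset.sum_range_add_sum_Ico (del n) hij
    rw [telescope n i, telescope n j] at this
    linarith
  have hIcoj : ∑ c ∈ Ico j (n - 1), del n c = rho n j - (rr n)⁻¹ := by
    have := Finset.sum_range_add_sum_Ico (del n) hj
    rw [telescope n j, telescope n (n - 1), rho_last] at this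
    linarith
  have e2 : ∑ c ∈ Ico i j, del n c * (bet n c i * bet n c j)
      = (rho n i - rho n j) * ((0 - ee n i / DD n) * (vv n j - ee n j / DD n)) := by
    rw [← hIcoi, Finset.sum_mul]
    apply Finset.sum_congr rfl
    intro c hc
    have hc2 := Finset.mem_Ico.mp hc
    unfold bet
    rw [if_neg (by omega), if_pos (by omega)]
  have e3 : ∑ c ∈ Ico j (n - 1), del n c * (bet n c i * bet n c j)
      = (rho n j - (rr n)⁻¹) * ((0 - ee n i / DD n) * (0 - ee n j / DD n)) := by
    rw [← hIcoj, Finset.sum_mul]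
    apply Finset.sum_congr rfl
    intro c hc
    have hc2 := Finset.mem_Ico.mp hc
    unfold bet
    rw [if_neg (by omega), if_neg (by omega)]
  rw [e1, e2, e3]
  have hvi : vv n i ≠ 0 := ne_of_gt (vv_pos n i)
  have hvj : vv n j ≠ 0 := ne_of_gt (vv_pos n j)
  have hr1 := rr_gt_one hn
  have hr : rr n ≠ 0 := by positivity
  have ha2 : rr n ^ 2 - 1 ≠ 0 := by nlinarith
  have hDd : DD n = (rr n ^ 2 - 1) / rr n := by
    unfold DD; field_simp
  rw [rho_eq n i, rho_eq n j]
  unfold ee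
  rw [hDd]
  field_simp
  ring

lemma entry_core {n : ℕ} (hn : 2 ≤ n) {i j : ℕ} (hij : i ≤ j) (hj : j ≤ n - 1) :
    xi i * vv n j
      = (1/2) * ((xi i + vv n i) * (xi j + vv n j))
        - c1 n * ((xi i - vv n i) * (xi j - vv n j))
        - c2 n * (xi i * xi j) - c2 n * (vv n i * vv n j)
        - ∑ c ∈ range (n - 1), del n c * (bet n c i * bet n c j) := by
  rw [betasum hn hij hj]
  have hr1 := rr_gt_one hn
  have hr : rr n ≠ 0 := by positivity
  have ha2 : rr n ^ 2 - 1 ≠ 0 := by nlinarith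
  have hDd : DD n = (rr n ^ 2 - 1) / rr n := by
    unfold DD; field_simp
  unfold c1 c2 ee
  rw [hDd]
  field_simp
  ring

lemma entry {n : ℕ} (hn : 2 ≤ n) {i j : ℕ} (hi : i ≤ n - 1) (hj : j ≤ n - 1) :
    xi (min i j) * vv n (max i j)
      = (1/2) * ((xi i + vv n i) * (xi j + vv n j))
        - c1 n * ((xi i - vv n i) * (xi j - vv n j))
        - c2 n * (xi i * xi j) - c2 n * (vv n i * vv n j)
        - ∑ c ∈ range (n - 1), del n c * (bet n c i * bet n c j) := by
  rcases le_total i j with h | h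
  · rw [min_eq_left h, max_eq_right h]
    exact entry_core hn h hj
  · rw [min_eq_right h, max_eq_left h]
    rw [entry_core hn h hi]
    have hswap : ∑ c ∈ range (n - 1), del n c * (bet n c j * bet n c i)
        = ∑ c ∈ range (n - 1), del n c * (bet n c i * bet n c j) :=
      Finset.sum_congr rfl (fun c _ => by ring)
    rw [hswap]
    ring

/-- Negative-weight adversary upper bound for ordered search: for `n ≥ 2` and arbitrary
reals `γ_1, …, γ_n` (not necessarily nonnegative) with `‖Toeplitz(γ_n, …, γ_1)‖ ≤ 1`,
we have `γ_n + 2 ∑_{i=1}^{n−1} γ_i ≤ 2 ∑_{k=0}^{n−1} ξ_k² + 1`. -/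
theorem negative_adversary_bound (n : ℕ) (hn : 2 ≤ n) (γ : ℕ → ℝ)
    (hnorm : sNorm (toeplitz n γ) ≤ 1) :
    γ n + 2 * ∑ i ∈ Finset.Icc 1 (n - 1), γ i
      ≤ 2 * ∑ k ∈ Finset.range n, (xi k) ^ 2 + 1 := by
  set A : ℕ → ℕ → ℝ := fun i j => γ (n - (max i j - min i j)) with hA
  set Q : (ℕ → ℝ) → ℝ := fun y => ∑ i ∈ range n, ∑ j ∈ range n, A i j * (y i * y j) with hQdef
  set Nm : (ℕ → ℝ) → ℝ := fun y => ∑ i ∈ range n, y i * y i with hNmdef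
  -- operator norm bound on quadratic forms
  have hQb : ∀ y : ℕ → ℝ, |Q y| ≤ Nm y := by
    intro y
    have hq := quad_bound (toeplitz n γ) hnorm (fun i : Fin n => y (i : ℕ))
    have h1 : Q y = ∑ i : Fin n, ∑ j : Fin n, toeplitz n γ i j * (y (i : ℕ) * y (j : ℕ)) := by
      simp only [hQdef]
      rw [← Fin.sum_univ_eq_sum_range (fun i => ∑ j ∈ range n, A i j * (y i * y j)) n]
      apply Finset.sum_congr rfl
      intro i _
      rw [← Fin.sum_univ_eq_sum_range (fun j => A (i : ℕ) j * (y (i : ℕ) * y j)) n]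
      rfl
    have h2 : Nm y = ∑ i : Fin n, (y (i : ℕ) * y (i : ℕ)) :=
      (Fin.sum_univ_eq_sum_range (fun i => y i * y i) n).symm
    rw [h1, h2]
    exact hq
  set w : ℕ → ℝ := fun i => xi i + vv n i with hw
  set dv : ℕ → ℝ := fun i => xi i - vv n i with hdv
  set uu : ℕ → ℝ := fun i => xi i with huu
  -- L1 restated
  have hL1 : γ n + 2 * ∑ k ∈ Finset.Icc 1 (n - 1), γ k
      = ∑ i ∈ range n, ∑ j ∈ range n, A i j * (xi (min i j) * vv n (max i j)) := by
    rw [← L1 n hn γ]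
    rfl
  -- sum-splitting helper
  have hsplit : ∀ (F1 F2 F3 F4 F5 : ℕ → ℕ → ℝ),
      ∑ i ∈ range n, ∑ j ∈ range n, (F1 i j - F2 i j - F3 i j - F4 i j - F5 i j)
        = ∑ i ∈ range n, ∑ j ∈ range n, F1 i j - ∑ i ∈ range n, ∑ j ∈ range n, F2 i j
          - ∑ i ∈ range n, ∑ j ∈ range n, F3 i j - ∑ i ∈ range n, ∑ j ∈ range n, F4 i j
          - ∑ i ∈ range n, ∑ j ∈ range n, F5 i j := by
    intro F1 F2 F3 F4 F5
    simp [Finset.sum_sub_distrib]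
  have hp5 : ∑ i ∈ range n, ∑ j ∈ range n,
        ∑ c ∈ range (n - 1), del n c * (A i j * (bet n c i * bet n c j))
      = ∑ c ∈ range (n - 1), del n c * Q (bet n c) := by
    simp only [hQdef, Finset.mul_sum]
    rw [Finset.sum_congr rfl (fun i (_ : i ∈ range n) => Finset.sum_comm)]
    exact Finset.sum_comm
  have hpull : ∀ (k : ℝ) (F : ℕ → ℕ → ℝ),
      ∑ i ∈ range n, ∑ j ∈ range n, k * F i j = k * ∑ i ∈ range n, ∑ j ∈ range n, F i j := by
    intro k F
    simp only [← Finset.mul_sum]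
  -- expansion of the double sum via the entry identity
  have hexp : ∑ i ∈ range n, ∑ j ∈ range n, A i j * (xi (min i j) * vv n (max i j))
      = (1/2) * Q w - c1 n * Q dv - c2 n * Q uu - c2 n * Q (vv n)
        - ∑ c ∈ range (n - 1), del n c * Q (bet n c) := by
    have hpt : ∀ i ∈ range n, ∀ j ∈ range n,
        A i j * (xi (min i j) * vv n (max i j))
          = (1/2) * (A i j * (w i * w j)) - c1 n * (A i j * (dv i * dv j))
            - c2 n * (A i j * (uu i * uu j)) - c2 n * (A i j * (vv n i * vv n j))
            - ∑ c ∈ range (n - 1), del n c * (A i j * (bet n c i * bet n c j)) := by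
      intro i hi j hj
      have hi' : i ≤ n - 1 := by have := mem_range.mp hi; omega
      have hj' : j ≤ n - 1 := by have := mem_range.mp hj; omega
      rw [entry hn hi' hj']
      rw [mul_sub, Finset.mul_sum]
      congr 1
      · simp only [hw, hdv, huu]; ring
      · apply Finset.sum_congr rfl
        intro c _
        ring
    rw [Finset.sum_congr rfl (fun i hi => Finset.sum_congr rfl (fun j hj => hpt i hi j hj))]
    rw [hsplit]
    rw [hpull (1/2), hpull (c1 n), hpull (c2 n), hpull (c2 n), hp5]
  -- trace identity from diagonal entries
  have htr : ∑ i ∈ range n, xi i * vv n i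
      = (1/2) * Nm w - c1 n * Nm dv - c2 n * Nm uu - c2 n * Nm (vv n)
        - ∑ c ∈ range (n - 1), del n c * Nm (bet n c) := by
    have hpt : ∀ i ∈ range n, xi i * vv n i
        = (1/2) * (w i * w i) - c1 n * (dv i * dv i) - c2 n * (uu i * uu i)
          - c2 n * (vv n i * vv n i)
          - ∑ c ∈ range (n - 1), del n c * (bet n c i * bet n c i) := by
      intro i hi
      have hi' : i ≤ n - 1 := by have := mem_range.mp hi; omega
      have h := entry hn hi' hi'
      rw [min_self, max_self] at h
      rw [h]
    rw [Finset.sum_congr rfl hpt]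
    have hs1 : ∀ (G1 G2 G3 G4 G5 : ℕ → ℝ),
        ∑ i ∈ range n, (G1 i - G2 i - G3 i - G4 i - G5 i)
          = ∑ i ∈ range n, G1 i - ∑ i ∈ range n, G2 i - ∑ i ∈ range n, G3 i
            - ∑ i ∈ range n, G4 i - ∑ i ∈ range n, G5 i := by
      intro G1 G2 G3 G4 G5
      simp [Finset.sum_sub_distrib]
    rw [hs1]
    have hq5 : ∑ i ∈ range n, ∑ c ∈ range (n - 1), del n c * (bet n c i * bet n c i)
        = ∑ c ∈ range (n - 1), del n c * Nm (bet n c) := by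
      simp only [hNmdef, Finset.mul_sum]
      exact Finset.sum_comm
    rw [hq5]
    simp only [hNmdef, ← Finset.mul_sum]
  -- the diagonal sums to 1
  have huv : ∑ i ∈ range n, xi i * vv n i = 1 := by
    have h3 := xi_conv (n - 1)
    rw [show n - 1 + 1 = n from by omega] at h3
    rw [← h3]
    rfl
  -- norm of w
  have hNmw : Nm w = 2 * ∑ k ∈ Finset.range n, (xi k) ^ 2 + 2 := by
    have hpt : ∀ i ∈ range n, w i * w i
        = xi i * xi i + vv n i * vv n i + 2 * (xi i * vv n i) := by
      intro i _
      simp only [hw]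
      ring
    simp only [hNmdef]
    rw [Finset.sum_congr rfl hpt]
    rw [Finset.sum_add_distrib, Finset.sum_add_distrib]
    have hv2 : ∑ i ∈ range n, vv n i * vv n i = ∑ i ∈ range n, xi i * xi i :=
      Finset.sum_range_reflect (fun k => xi k * xi k) n
    have hsq : ∑ i ∈ range n, xi i * xi i = ∑ k ∈ Finset.range n, (xi k) ^ 2 := by
      apply Finset.sum_congr rfl
      intro i _
      ring
    rw [hv2, hsq, ← Finset.mul_sum, huv]
    ring
  -- collect the inequalities
  have hc1 := c1_nonneg hn
  have hc2 := c2_nonneg hn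
  have hb1 : Q w ≤ Nm w := (abs_le.mp (hQb w)).2
  have hb2 : -(c1 n * Nm dv) ≤ c1 n * Q dv := by
    have h := mul_le_mul_of_nonneg_left (abs_le.mp (hQb dv)).1 hc1
    rw [mul_neg] at h
    exact h
  have hb3 : -(c2 n * Nm uu) ≤ c2 n * Q uu := by
    have h := mul_le_mul_of_nonneg_left (abs_le.mp (hQb uu)).1 hc2
    rw [mul_neg] at h
    exact h
  have hb4 : -(c2 n * Nm (vv n)) ≤ c2 n * Q (vv n) := by
    have h := mul_le_mul_of_nonneg_left (abs_le.mp (hQb (vv n))).1 hc2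
    rw [mul_neg] at h
    exact h
  have hb5 : -(∑ c ∈ range (n - 1), del n c * Nm (bet n c))
      ≤ ∑ c ∈ range (n - 1), del n c * Q (bet n c) := by
    rw [← Finset.sum_neg_distrib]
    apply Finset.sum_le_sum
    intro c _
    have h := mul_le_mul_of_nonneg_left (abs_le.mp (hQb (bet n c))).1 (del_nonneg n c)
    rw [mul_neg] at h
    exact h
  rw [huv] at htr
  linarith [hL1, hexp, htr, hNmw, hb1, hb2, hb3, hb4, hb5]
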